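/- arXiv:2508.12861 — 3 statements merged into one kernel-verified Lean document; each statement's English description precedes it below -/
import Mathlib

section
/- Let C be a positive natural number and let p ∈ ℝ^C be a fixed probability vector with strictly positive components. Consider deviation vectors δ ∈ ℝ^C in the hyperplane H = {δ : ∑_{i=1}^{C} δ_i = 0}. Then, as δ → 0 within H, the Jeffreys divergence satisfies D_J(p, p + δ) = ∑_{i=1}^{C} δ_i²/p_i − (1/2)·∑_{i=1}^{C} δ_i³/p_i² + O(‖δ‖⁴); equivalently, using the closed form D_J(p, p+δ) = ∑_i δ_i·(log(p_i + δ_i) − log p_i), the difference between this quantity and ∑ δ_i²/p_i − (1/2)∑ δ_i³/p_i² is O(‖δ‖⁴) as δ → 0 in H. -/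
open Real Finset Filter Asymptotics

lemma key_pointwise {p t : ℝ} (hp : 0 < p) (ht : |t| ≤ p / 2) :
    |t * (Real.log (p + t) - Real.log p) - t ^ 2 / p + t ^ 3 / (2 * p ^ 2)|
      ≤ 2 / p ^ 3 * t ^ 4 := by
  have hpt : 0 < p + t := by
    have := neg_le_of_abs_le ht; linarith
  set x : ℝ := t / p with hx
  have hxabs : |x| ≤ 1 / 2 := by
    rw [hx, abs_div, abs_of_pos hp, div_le_div_iff₀ (by positivity) (by norm_num)]
    linarith
  have hxlt : |(-x)| < 1 := by rw [abs_neg]; linarith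
  have hlog : Real.log (p + t) - Real.log p = Real.log (1 - (-x)) := by
    have : 1 - (-x) = (p + t) / p := by field_simp [hx]; rw [hx, sub_mul, neg_mul, div_mul_cancel₀ t hp.ne']; ring
    rw [this, Real.log_div (by positivity) hp.ne']
  have hest := Real.abs_log_sub_add_sum_range_le hxlt 2
  have hsum : (∑ i ∈ range 2, (-x) ^ (i + 1) / (i + 1)) = -x + x ^ 2 / 2 := by
    simp [Finset.sum_range_succ]
    ring
  rw [hsum] at hest
  have hxx : |(-x)| ^ 3 / (1 - |(-x)|) ≤ 2 * |x| ^ 3 := by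
    rw [abs_neg]
    rw [div_le_iff₀ (by linarith)]
    have h3 : |x| ^ 3 ≥ 0 := by positivity
    nlinarith
  have hest2 : |(-x + x ^ 2 / 2) + Real.log (1 - (-x))| ≤ 2 * |x| ^ 3 :=
    hest.trans hxx
  have hmul := mul_le_mul_of_nonneg_left hest2 (abs_nonneg t)
  rw [← abs_mul] at hmul
  have heq : t * ((-x + x ^ 2 / 2) + Real.log (1 - (-x)))
      = t * (Real.log (p + t) - Real.log p) - t ^ 2 / p + t ^ 3 / (2 * p ^ 2) := by
    rw [← hlog, hx]
    field_simp
    ring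
  rw [heq] at hmul
  refine hmul.trans ?_
  have : |t| * (2 * |x| ^ 3) = 2 / p ^ 3 * (|t| * |t| ^ 3) := by
    rw [hx, abs_div, abs_of_pos hp]
    field_simp
  rw [this]
  have h4 : |t| * |t| ^ 3 = t ^ 4 := by
    rcases abs_cases t with ⟨h, _⟩ | ⟨h, _⟩ <;> rw [h] <;> ring
  rw [h4]

/-- Third-order Taylor expansion of the Jeffreys divergence
`D_J(p, p + δ) = ∑ δᵢ²/pᵢ - (1/2) ∑ δᵢ³/pᵢ² + O(‖δ‖⁴)` as `δ → 0` within the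
hyperplane `{δ : ∑ δᵢ = 0}`, stated both via the sum of the two KL divergences
and via the closed form `D_J(p, p+δ) = ∑ δᵢ (log (pᵢ + δᵢ) - log pᵢ)`. -/
theorem jeffreys_third_order_expansion (C : ℕ) (hC : 0 < C) (p : Fin C → ℝ)
    (hp : ∀ i, 0 < p i) (hpsum : ∑ i, p i = 1) :
    ((fun δ : Fin C → ℝ =>
        ((∑ i, p i * Real.log (p i / (p i + δ i))) +
            (∑ i, (p i + δ i) * Real.log ((p i + δ i) / p i))) -
          ((∑ i, (δ i) ^ 2 / p i) - (1 / 2) * ∑ i, (δ i) ^ 3 / (p i) ^ 2))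
      =O[nhdsWithin 0 {δ : Fin C → ℝ | ∑ i, δ i = 0}]
      (fun δ : Fin C → ℝ => ‖δ‖ ^ 4)) ∧
    ((fun δ : Fin C → ℝ =>
        (∑ i, δ i * (Real.log (p i + δ i) - Real.log (p i))) -
          ((∑ i, (δ i) ^ 2 / p i) - (1 / 2) * ∑ i, (δ i) ^ 3 / (p i) ^ 2))
      =O[nhdsWithin 0 {δ : Fin C → ℝ | ∑ i, δ i = 0}]
      (fun δ : Fin C → ℝ => ‖δ‖ ^ 4)) := by
  have hsmall : ∀ᶠ δ : Fin C → ℝ in nhds 0, ∀ i, |δ i| ≤ p i / 2 := by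
    refine Filter.eventually_all.mpr fun i => ?_
    have ht : Filter.Tendsto (fun δ : Fin C → ℝ => δ i) (nhds 0) (nhds 0) :=
      (continuous_apply i).tendsto' 0 0 rfl
    have : ∀ᶠ x : ℝ in nhds (0:ℝ), |x| ≤ p i / 2 := by
      filter_upwards [eventually_abs_sub_lt (0:ℝ) (half_pos (hp i))] with x hx
      simpa using hx.le
    exact ht.eventually this
  have hsmall' : ∀ᶠ δ : Fin C → ℝ in nhdsWithin 0 {δ : Fin C → ℝ | ∑ i, δ i = 0},
      ∀ i, |δ i| ≤ p i / 2 := nhdsWithin_le_nhds hsmall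
  -- core big-O for second form
  have h2 : ((fun δ : Fin C → ℝ =>
        (∑ i, δ i * (Real.log (p i + δ i) - Real.log (p i))) -
          ((∑ i, (δ i) ^ 2 / p i) - (1 / 2) * ∑ i, (δ i) ^ 3 / (p i) ^ 2))
      =O[nhdsWithin 0 {δ : Fin C → ℝ | ∑ i, δ i = 0}]
      (fun δ : Fin C → ℝ => ‖δ‖ ^ 4)) := by
    rw [isBigO_iff]
    refine ⟨∑ i, 2 / (p i) ^ 3, ?_⟩
    filter_upwards [hsmall'] with δ hδ
    have hrw : (∑ i, δ i * (Real.log (p i + δ i) - Real.log (p i))) -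
          ((∑ i, (δ i) ^ 2 / p i) - (1 / 2) * ∑ i, (δ i) ^ 3 / (p i) ^ 2)
        = ∑ i, (δ i * (Real.log (p i + δ i) - Real.log (p i))
            - (δ i) ^ 2 / p i + (δ i) ^ 3 / (2 * (p i) ^ 2)) := by
      simp only [Finset.mul_sum, ← Finset.sum_sub_distrib]
      refine Finset.sum_congr rfl fun i _ => ?_
      field_simp
      have := (hp i).ne'; field_simp; ring
    rw [Real.norm_eq_abs, hrw, Real.norm_eq_abs,
      abs_of_nonneg (by positivity : (0:ℝ) ≤ ‖δ‖ ^ 4)]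
    refine (Finset.abs_sum_le_sum_abs _ _).trans ?_
    rw [Finset.sum_mul]
    refine Finset.sum_le_sum fun i _ => ?_
    refine (key_pointwise (hp i) (hδ i)).trans ?_
    have h1 : |δ i| ≤ ‖δ‖ := by
      simpa using norm_le_pi_norm δ i
    have : (δ i) ^ 4 ≤ ‖δ‖ ^ 4 := by
      have he : (δ i) ^ 4 = |δ i| ^ 4 := by
        rcases abs_cases (δ i) with ⟨h, _⟩ | ⟨h, _⟩ <;> rw [h] <;> ring
      rw [he]
      exact pow_le_pow_left₀ (abs_nonneg _) h1 4
    have hc : (0:ℝ) ≤ 2 / (p i) ^ 3 := le_of_lt (div_pos two_pos (pow_pos (hp i) 3))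
    exact mul_le_mul_of_nonneg_left this hc
  refine ⟨?_, h2⟩
  refine h2.congr' ?_ EventuallyEq.rfl
  filter_upwards [hsmall'] with δ hδ
  have : (∑ i, δ i * (Real.log (p i + δ i) - Real.log (p i)))
      = ((∑ i, p i * Real.log (p i / (p i + δ i))) +
          (∑ i, (p i + δ i) * Real.log ((p i + δ i) / p i))) := by
    rw [← Finset.sum_add_distrib]
    refine Finset.sum_congr rfl fun i _ => ?_
    have hpt : 0 < p i + δ i := by
      have := neg_le_of_abs_le (hδ i); linarith [hp i]
    rw [Real.log_div (hp i).ne' hpt.ne', Real.log_div hpt.ne' (hp i).ne']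
    ring
  rw [this]
end

section
/- Let C be a positive natural number and let p ∈ ℝ^C be a fixed probability vector with strictly positive components. Consider deviation vectors δ ∈ ℝ^C in the hyperplane H = {δ : ∑_{i=1}^{C} δ_i = 0}. Then, as δ → 0 within H, the squared Fisher–Rao geodesic distance on the probability simplex satisfies d²(p, p + δ) = (2·arccos(∑_{i=1}^{C} √(p_i·(p_i + δ_i))))² = ∑_{i=1}^{C} δ_i²/p_i − (1/2)·∑_{i=1}^{C} δ_i³/p_i² + O(‖δ‖⁴); that is, the difference between (2·arccos(∑ √(p_i(p_i+δ_i))))² and ∑ δ_i²/p_i − (1/2)∑ δ_i³/p_i² is O(‖δ‖⁴) as δ → 0 in H. -/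
open Real Finset Filter Asymptotics

lemma sqrt_taylor' (x : ℝ) (hx : |x| ≤ 1/2) :
    |Real.sqrt (1+x) - (1 + x/2 - x^2/8 + x^3/16)| ≤ x^4 := by
  obtain ⟨h1, h2⟩ := abs_le.mp hx
  have hx4 : (0:ℝ) ≤ x^4 := by positivity
  have hQ1 : (0:ℝ) ≤ 133/64 + 63/64*x - 63/256*x^2 + x^3/8 + x^4 := by
    nlinarith [sq_nonneg x, sq_nonneg (x^2), mul_nonneg (mul_nonneg (sq_nonneg x) (by linarith : (0:ℝ) ≤ 1/2 - x)) (by linarith : (0:ℝ) ≤ 1/2 + x)]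
  have hQ2 : (0:ℝ) ≤ 123/64 + 65/64*x - 65/256*x^2 + x^3/8 - x^4 := by
    nlinarith [sq_nonneg x, sq_nonneg (x^2), mul_nonneg (mul_nonneg (sq_nonneg x) (by linarith : (0:ℝ) ≤ 1/2 - x)) (by linarith : (0:ℝ) ≤ 1/2 + x)]
  have hxsq : x^2 ≤ 1/4 := by nlinarith
  have hPm : (0:ℝ) ≤ 1 + x/2 - x^2/8 + x^3/16 - x^4 := by
    nlinarith [sq_nonneg x, sq_nonneg (x^2), mul_le_mul_of_nonneg_left hxsq (sq_nonneg x), mul_le_of_le_one_left (sq_nonneg x) (by linarith : x*1 ≤ 1)]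
  have hub : Real.sqrt (1+x) ≤ (1 + x/2 - x^2/8 + x^3/16) + x^4 := by
    rw [show (1 + x/2 - x^2/8 + x^3/16) + x^4 = Real.sqrt (((1 + x/2 - x^2/8 + x^3/16)+x^4)^2) from (Real.sqrt_sq (by linarith)).symm]
    apply Real.sqrt_le_sqrt
    nlinarith [mul_nonneg hx4 hQ1]
  have hlb : (1 + x/2 - x^2/8 + x^3/16) - x^4 ≤ Real.sqrt (1+x) := by
    rw [show (1 + x/2 - x^2/8 + x^3/16) - x^4 = Real.sqrt (((1 + x/2 - x^2/8 + x^3/16)-x^4)^2) from (Real.sqrt_sq hPm).symm]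
    apply Real.sqrt_le_sqrt
    nlinarith [mul_nonneg hx4 hQ2]
  rw [abs_le]; constructor <;> linarith

lemma scaled_taylor (p δ : ℝ) (hp : 0 < p) (hd : |δ| ≤ p/2) :
    |8*p + 4*δ - 8*Real.sqrt (p*(p+δ)) - δ^2/p + δ^3/(2*p^2)| ≤ 8*δ^4/p^3 := by
  have hp' : p ≠ 0 := hp.ne'
  have hx : |δ/p| ≤ 1/2 := by
    rw [abs_div, abs_of_pos hp, div_le_iff₀ hp]
    linarith [hd]
  have hsq : Real.sqrt (p*(p+δ)) = p * Real.sqrt (1 + δ/p) := by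
    rw [show p*(p+δ) = p^2 * (1 + δ/p) by field_simp,
      Real.sqrt_mul (sq_nonneg p), Real.sqrt_sq hp.le]
  have key := sqrt_taylor' (δ/p) hx
  have hident : 8*p + 4*δ - 8*Real.sqrt (p*(p+δ)) - δ^2/p + δ^3/(2*p^2)
      = 8*p * ((1 + (δ/p)/2 - (δ/p)^2/8 + (δ/p)^3/16) - Real.sqrt (1 + δ/p)) := by
    rw [hsq]; field_simp; ring
  rw [hident, abs_mul, abs_of_pos (by linarith : (0:ℝ) < 8*p), abs_sub_comm]
  have h2 : (8:ℝ)*p * |Real.sqrt (1 + δ/p) - (1 + (δ/p)/2 - (δ/p)^2/8 + (δ/p)^3/16)|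
      ≤ 8*p * (δ/p)^4 := by
    apply mul_le_mul_of_nonneg_left key (by linarith)
  calc _ ≤ 8*p * (δ/p)^4 := h2
    _ = 8*δ^4/p^3 := by field_simp

lemma aux_theta (t b : ℝ) (ht0 : 0 ≤ t) (ht1 : t ≤ 1) (hb : 0 ≤ 1 - b)
    (hcb : |b - (1 - t^2/2)| ≤ t^4 * (5/96)) :
    |t ^ 2 - 2 * (1 - b)| ≤ (1 - b) ^ 2 := by
  obtain ⟨hcb1, hcb2⟩ := abs_le.mp hcb
  have ht2 : t ^ 2 ≤ 1 := by nlinarith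
  have ht4 : t ^ 4 ≤ t ^ 2 := by nlinarith [sq_nonneg t]
  have htsq : t ^ 2 ≤ 3 * (1 - b) := by nlinarith
  have h44 : t ^ 4 ≤ 9 * (1 - b) ^ 2 := by nlinarith [sq_nonneg t]
  rw [abs_le]
  constructor <;> nlinarith

/-- Third-order expansion of the squared Fisher–Rao geodesic distance on the
probability simplex:
`(2 arccos (∑ √(pᵢ (pᵢ + δᵢ))))² = ∑ δᵢ²/pᵢ - (1/2) ∑ δᵢ³/pᵢ² + O(‖δ‖⁴)`
as `δ → 0` within the hyperplane `{δ : ∑ δᵢ = 0}`. -/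
theorem fisher_rao_distance_third_order_expansion (C : ℕ) (hC : 0 < C)
    (p : Fin C → ℝ) (hp : ∀ i, 0 < p i) (hpsum : ∑ i, p i = 1) :
    (fun δ : Fin C → ℝ =>
        (2 * Real.arccos (∑ i, Real.sqrt (p i * (p i + δ i)))) ^ 2 -
          ((∑ i, (δ i) ^ 2 / p i) - (1 / 2) * ∑ i, (δ i) ^ 3 / (p i) ^ 2))
      =O[nhdsWithin 0 {δ : Fin C → ℝ | ∑ i, δ i = 0}]
      (fun δ : Fin C → ℝ => ‖δ‖ ^ 4) := by
  have hnonempty : Nonempty (Fin C) := Fin.pos_iff_nonempty.mp hC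
  have hne : (Finset.univ : Finset (Fin C)).Nonempty := Finset.univ_nonempty
  set m := Finset.univ.inf' hne p with hmdef
  have hm0 : 0 < m := (Finset.lt_inf'_iff hne).mpr (fun i _ => hp i)
  have hmle : ∀ i, m ≤ p i := fun i => Finset.inf'_le _ (Finset.mem_univ i)
  clear_value m
  set K1 : ℝ := ∑ i, 8 / p i ^ 3 with hK1def
  set K2 : ℝ := ∑ i, 1 / p i with hK2def
  set K3 : ℝ := ∑ i, 1 / p i ^ 2 with hK3def
  have hK1pos : 0 < K1 := Finset.sum_pos (fun i _ => by have := hp i; positivity) hne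
  have hK2pos : 0 < K2 := Finset.sum_pos (fun i _ => by have := hp i; positivity) hne
  have hK3pos : 0 < K3 := Finset.sum_pos (fun i _ => by have := hp i; positivity) hne
  clear_value K1 K2 K3
  rw [Asymptotics.isBigO_iff]
  refine ⟨4 * ((K1 + K2 + K3) / 8) ^ 2 + K1, ?_⟩
  have hev : ∀ᶠ δ : Fin C → ℝ in
      nhdsWithin 0 {δ : Fin C → ℝ | ∑ i, δ i = 0}, ‖δ‖ < min 1 (m/2) := by
    have h1 : ∀ᶠ δ : Fin C → ℝ in nhds 0, ‖δ‖ < min 1 (m/2) := by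
      have hball := Metric.ball_mem_nhds (0 : Fin C → ℝ)
        (by positivity : (0:ℝ) < min 1 (m/2))
      filter_upwards [hball] with δ hδ
      simpa [Metric.mem_ball, dist_zero_right] using hδ
    exact h1.filter_mono nhdsWithin_le_nhds
  filter_upwards [hev, self_mem_nhdsWithin] with δ hδn hδH
  replace hδH : ∑ i, δ i = 0 := hδH
  have hδ1 : ‖δ‖ ≤ 1 := le_of_lt (lt_of_lt_of_le hδn (min_le_left _ _))
  have hδm : ‖δ‖ ≤ m/2 := le_of_lt (lt_of_lt_of_le hδn (min_le_right _ _))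
  have habs : ∀ i, |δ i| ≤ ‖δ‖ := fun i => by
    simpa [Real.norm_eq_abs] using norm_le_pi_norm δ i
  have hδi : ∀ i, |δ i| ≤ p i / 2 := fun i =>
    (habs i).trans (hδm.trans (by linarith [hmle i]))
  set B := ∑ i, Real.sqrt (p i * (p i + δ i)) with hBdef
  set S := ∑ i, (δ i) ^ 2 / p i with hSdef
  set T := ∑ i, (δ i) ^ 3 / (p i) ^ 2 with hTdef
  have hSnn : 0 ≤ S := Finset.sum_nonneg fun i _ => by have := hp i; positivity
  -- B ≤ 1
  have hB1 : B ≤ 1 := by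
    have hbd : ∀ i ∈ Finset.univ,
        Real.sqrt (p i * (p i + δ i)) ≤ (p i + (p i + δ i)) / 2 := by
      intro i _
      rw [show (p i + (p i + δ i)) / 2 =
          Real.sqrt (((p i + (p i + δ i)) / 2) ^ 2) from
        (Real.sqrt_sq (by nlinarith [hp i, (abs_le.mp (hδi i)).1])).symm]
      apply Real.sqrt_le_sqrt
      nlinarith [sq_nonneg (p i - (p i + δ i))]
    calc B ≤ ∑ i, (p i + (p i + δ i)) / 2 := Finset.sum_le_sum hbd
      _ = 1 := by
        rw [← Finset.sum_div]
        rw [show ∑ i, (p i + (p i + δ i)) = ∑ i, (2 * p i + δ i) from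
          Finset.sum_congr rfl fun i _ => by ring]
        rw [Finset.sum_add_distrib, ← Finset.mul_sum, hpsum, hδH]
        norm_num
  -- B ≥ √2/2
  have hBlb : Real.sqrt 2 / 2 ≤ B := by
    have hbd : ∀ i ∈ Finset.univ,
        p i * (Real.sqrt 2 / 2) ≤ Real.sqrt (p i * (p i + δ i)) := by
      intro i _
      have h2 : p i * (Real.sqrt 2 / 2) =
          Real.sqrt ((p i * (Real.sqrt 2 / 2)) ^ 2) :=
        (Real.sqrt_sq (by have := (hp i).le; positivity)).symm
      rw [h2]
      apply Real.sqrt_le_sqrt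
      have hs2 : Real.sqrt 2 ^ 2 = 2 := Real.sq_sqrt (by norm_num)
      have : (p i * (Real.sqrt 2 / 2)) ^ 2 = p i ^ 2 / 2 := by
        rw [mul_pow, div_pow, hs2]; ring
      rw [this]
      nlinarith [hp i, (abs_le.mp (hδi i)).1]
    calc Real.sqrt 2 / 2 = ∑ i, p i * (Real.sqrt 2 / 2) := by
          rw [← Finset.sum_mul, hpsum, one_mul]
      _ ≤ B := Finset.sum_le_sum hbd
  have hBneg1 : -1 ≤ B := by
    have := Real.sqrt_nonneg 2; linarith
  clear_value B S T
  set θ := Real.arccos B with hθdef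
  have hθ0 : 0 ≤ θ := Real.arccos_nonneg B
  have hcosθ : Real.cos θ = B := Real.cos_arccos hBneg1 hB1
  have hθ1 : θ ≤ 1 := by
    have h4 : θ ≤ π / 4 := Real.arccos_le_pi_div_four.mpr hBlb
    linarith [Real.pi_le_four]
  clear_value θ
  have hcb := Real.cos_bound (x := θ) (by rwa [abs_of_nonneg hθ0])
  rw [hcosθ, abs_of_nonneg hθ0] at hcb
  have hB1' : 0 ≤ 1 - B := by linarith
  have hkey : |θ ^ 2 - 2 * (1 - B)| ≤ (1 - B) ^ 2 :=
    aux_theta θ B hθ0 hθ1 hB1' hcb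
  -- the sum identity
  have hsum_id : (8:ℝ) - 8 * B - S + (1/2) * T =
      ∑ i, (8 * p i + 4 * δ i - 8 * Real.sqrt (p i * (p i + δ i))
        - (δ i) ^ 2 / p i + (δ i) ^ 3 / (2 * (p i) ^ 2)) := by
    have e1 : (8:ℝ) = ∑ i, 8 * p i := by rw [← Finset.mul_sum, hpsum, mul_one]
    have e2 : 8 * B = ∑ i, 8 * Real.sqrt (p i * (p i + δ i)) := by
      rw [hBdef, Finset.mul_sum]
    have e3 : (1/2) * T = ∑ i, (1/2) * ((δ i) ^ 3 / (p i) ^ 2) := by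
      rw [hTdef, Finset.mul_sum]
    have e4 : (0:ℝ) = ∑ i, 4 * δ i := by rw [← Finset.mul_sum, hδH, mul_zero]
    calc (8:ℝ) - 8 * B - S + (1/2) * T
        = (∑ i, 8 * p i) + (∑ i, 4 * δ i)
          - (∑ i, 8 * Real.sqrt (p i * (p i + δ i)))
          - (∑ i, (δ i) ^ 2 / p i) + ∑ i, (1/2) * ((δ i) ^ 3 / (p i) ^ 2) := by
          rw [← e1, ← e2, ← e3, ← e4, hSdef]; ring
      _ = _ := by
          rw [← Finset.sum_add_distrib, ← Finset.sum_sub_distrib,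
            ← Finset.sum_sub_distrib, ← Finset.sum_add_distrib]
          exact Finset.sum_congr rfl fun i _ => by ring
  have hnorm4 : (0:ℝ) ≤ ‖δ‖ ^ 4 := by positivity
  have hpow : ∀ i, (δ i) ^ 4 ≤ ‖δ‖ ^ 4 := fun i => by
    calc (δ i) ^ 4 = |δ i| ^ 4 := by rw [← abs_pow, abs_of_nonneg (by positivity)]
      _ ≤ ‖δ‖ ^ 4 := pow_le_pow_left₀ (abs_nonneg _) (habs i) 4
  have hE : |8 - 8 * B - S + (1/2) * T| ≤ K1 * ‖δ‖ ^ 4 := by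
    rw [hsum_id]
    calc |∑ i, (8 * p i + 4 * δ i - 8 * Real.sqrt (p i * (p i + δ i))
          - (δ i) ^ 2 / p i + (δ i) ^ 3 / (2 * (p i) ^ 2))|
        ≤ ∑ i, |8 * p i + 4 * δ i - 8 * Real.sqrt (p i * (p i + δ i))
          - (δ i) ^ 2 / p i + (δ i) ^ 3 / (2 * (p i) ^ 2)| :=
          Finset.abs_sum_le_sum_abs _ _
      _ ≤ ∑ i, 8 / p i ^ 3 * ‖δ‖ ^ 4 := by
          apply Finset.sum_le_sum
          intro i _
          calc |8 * p i + 4 * δ i - 8 * Real.sqrt (p i * (p i + δ i))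
              - (δ i) ^ 2 / p i + (δ i) ^ 3 / (2 * (p i) ^ 2)|
              ≤ 8 * (δ i) ^ 4 / (p i) ^ 3 := scaled_taylor (p i) (δ i) (hp i) (hδi i)
            _ = 8 / p i ^ 3 * (δ i) ^ 4 := by ring
            _ ≤ 8 / p i ^ 3 * ‖δ‖ ^ 4 :=
                mul_le_mul_of_nonneg_left (hpow i) (by have := hp i; positivity)
      _ = K1 * ‖δ‖ ^ 4 := by rw [hK1def, Finset.sum_mul]
  have hpow2 : ∀ i, (δ i) ^ 2 ≤ ‖δ‖ ^ 2 := fun i => by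
    calc (δ i) ^ 2 = |δ i| ^ 2 := (sq_abs _).symm
      _ ≤ ‖δ‖ ^ 2 := pow_le_pow_left₀ (abs_nonneg _) (habs i) 2
  have hpow3 : ∀ i, |δ i| ^ 3 ≤ ‖δ‖ ^ 3 := fun i =>
    pow_le_pow_left₀ (abs_nonneg _) (habs i) 3
  have hS : S ≤ K2 * ‖δ‖ ^ 2 := by
    rw [hSdef, hK2def, Finset.sum_mul]
    apply Finset.sum_le_sum
    intro i _
    rw [div_eq_mul_one_div, mul_comm]
    exact mul_le_mul_of_nonneg_left (hpow2 i) (by have := hp i; positivity)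
  have hT : |T| ≤ K3 * ‖δ‖ ^ 3 := by
    rw [hTdef, hK3def, Finset.sum_mul]
    calc |∑ i, (δ i) ^ 3 / (p i) ^ 2| ≤ ∑ i, |(δ i) ^ 3 / (p i) ^ 2| :=
        Finset.abs_sum_le_sum_abs _ _
      _ ≤ ∑ i, 1 / p i ^ 2 * ‖δ‖ ^ 3 := by
          apply Finset.sum_le_sum
          intro i _
          rw [abs_div, abs_of_pos (by have := hp i; positivity : (0:ℝ) < (p i)^2), abs_pow]
          rw [div_eq_mul_one_div, mul_comm]
          exact mul_le_mul_of_nonneg_left (hpow3 i) (by have := hp i; positivity)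
  -- bound on 1 - B
  have hsq1 : ‖δ‖ ^ 2 ≤ 1 := pow_le_one₀ (norm_nonneg δ) hδ1
  have hn2 : ‖δ‖ ^ 4 ≤ ‖δ‖ ^ 2 := by
    calc ‖δ‖ ^ 4 = ‖δ‖ ^ 2 * ‖δ‖ ^ 2 := by ring
      _ ≤ 1 * ‖δ‖ ^ 2 := mul_le_mul_of_nonneg_right hsq1 (sq_nonneg _)
      _ = ‖δ‖ ^ 2 := one_mul _
  have hn3 : ‖δ‖ ^ 3 ≤ ‖δ‖ ^ 2 := by
    calc ‖δ‖ ^ 3 = ‖δ‖ * ‖δ‖ ^ 2 := by ring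
      _ ≤ 1 * ‖δ‖ ^ 2 := mul_le_mul_of_nonneg_right hδ1 (sq_nonneg _)
      _ = ‖δ‖ ^ 2 := one_mul _
  have h1B : 1 - B ≤ ((K1 + K2 + K3) / 8) * ‖δ‖ ^ 2 := by
    have h8 : 8 * (1 - B) = (8 - 8 * B - S + (1/2) * T) + S - (1/2) * T := by ring
    have hE' := abs_le.mp hE
    have hT' := abs_le.mp hT
    have habs8 : 8 * (1 - B) ≤ K1 * ‖δ‖ ^ 4 + K2 * ‖δ‖ ^ 2 + K3 * ‖δ‖ ^ 3 := by
      linarith [hS, hE'.1, hE'.2, hT'.1, hT'.2]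
    have m1 := mul_le_mul_of_nonneg_left hn2 hK1pos.le
    have m2 := mul_le_mul_of_nonneg_left hn3 hK3pos.le
    linarith
  -- combine
  have hBB : (1 - B) ^ 2 ≤ (((K1 + K2 + K3) / 8) * ‖δ‖ ^ 2) ^ 2 :=
    pow_le_pow_left₀ hB1' h1B 2
  have hfinal : |(2 * θ) ^ 2 - (S - (1/2) * T)| ≤
      (4 * ((K1 + K2 + K3) / 8) ^ 2 + K1) * ‖δ‖ ^ 4 := by
    have hid : (2 * θ) ^ 2 - (S - (1/2) * T) =
        4 * (θ ^ 2 - 2 * (1 - B)) + (8 - 8 * B - S + (1/2) * T) := by ring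
    rw [hid]
    calc |4 * (θ ^ 2 - 2 * (1 - B)) + (8 - 8 * B - S + (1/2) * T)|
        ≤ 4 * |θ ^ 2 - 2 * (1 - B)| + |8 - 8 * B - S + (1/2) * T| := by
          have h4a := abs_add_le (4 * (θ ^ 2 - 2 * (1 - B))) (8 - 8 * B - S + (1/2) * T)
          rw [abs_mul, abs_of_nonneg (by norm_num : (0:ℝ) ≤ 4)] at h4a
          exact h4a
      _ ≤ 4 * (1 - B) ^ 2 + K1 * ‖δ‖ ^ 4 := by
          have := mul_le_mul_of_nonneg_left hkey (by norm_num : (0:ℝ) ≤ 4)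
          linarith
      _ ≤ (4 * ((K1 + K2 + K3) / 8) ^ 2 + K1) * ‖δ‖ ^ 4 := by
          have h1 : (((K1 + K2 + K3) / 8) * ‖δ‖ ^ 2) ^ 2 =
              ((K1 + K2 + K3) / 8) ^ 2 * ‖δ‖ ^ 4 := by ring
          linarith [hBB, h1.le, h1.ge]
  rw [Real.norm_eq_abs, Real.norm_eq_abs, abs_of_nonneg hnorm4]
  exact hfinal
end

section
/- (Discrete version of the paper's Theorem 2: Geodesic Divergence Approximation.) Let C be a positive natural number and let p ∈ ℝ^C be a fixed probability vector with strictly positive components. Consider deviation vectors δ ∈ ℝ^C in the hyperplane H = {δ : ∑_{i=1}^{C} δ_i = 0}, so that q = p + δ is a probability vector with positive components for ‖δ‖ small. Then the Jeffreys divergence approximates the squared Fisher–Rao geodesic distance to fourth order: as δ → 0 within H, D_KL(p ‖ p+δ) + D_KL(p+δ ‖ p) = (2·arccos(∑_{i=1}^{C} √(p_i·(p_i + δ_i))))² + O(‖δ‖⁴); i.e. the difference D_J(p, p+δ) − d²(p, p+δ) is O(‖δ‖⁴) as δ → 0 in H. -/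
open Real Finset Filter Asymptotics

lemma log_taylor3 {x : ℝ} (hx : |x| ≤ 1/2) :
    |x * Real.log (1 + x) - (x^2 - x^3/2)| ≤ 2 * |x|^4 := by
  have h1 : |(-x : ℝ)| < 1 := by rw [abs_neg]; linarith [abs_nonneg x]
  have h := Real.abs_log_sub_add_sum_range_le h1 2
  rw [abs_neg] at h
  have hsum : (∑ i ∈ Finset.range 2, (-x) ^ (i+1) / (i+1)) = -x + x^2/2 := by
    simp [Finset.sum_range_succ]; ring
  rw [hsum] at h
  have h1x : (1 : ℝ) - -x = 1 + x := by ring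
  rw [h1x] at h
  have hlog : |Real.log (1 + x) - x + x^2/2| ≤ 2 * |x|^3 := by
    have h2 : |x|^3 / (1 - |x|) ≤ 2 * |x|^3 := by
      rw [div_le_iff₀ (by linarith [abs_nonneg x] : (0:ℝ) < 1 - |x|)]
      nlinarith [abs_nonneg x, pow_nonneg (abs_nonneg x) 3]
    calc |Real.log (1 + x) - x + x^2/2| = |(-x + x^2/2) + Real.log (1 + x)| := by
            ring_nf
      _ ≤ |x|^3 / (1 - |x|) := h
      _ ≤ 2 * |x|^3 := h2
  calc |x * Real.log (1 + x) - (x^2 - x^3/2)|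
      = |x| * |Real.log (1 + x) - x + x^2/2| := by
        rw [← abs_mul]; ring_nf
    _ ≤ |x| * (2 * |x|^3) := mul_le_mul_of_nonneg_left hlog (abs_nonneg x)
    _ = 2 * |x|^4 := by ring

lemma sqrt_taylor3 {x : ℝ} (hx : |x| ≤ 1/2) :
    |Real.sqrt (1 + x) - (1 + x/2 - x^2/8 + x^3/16)| ≤ x^4 := by
  have hx1 : -(1/2 : ℝ) ≤ x := (abs_le.1 hx).1
  have hx2 : x ≤ 1/2 := (abs_le.1 hx).2
  have h0 : (0:ℝ) ≤ 1 + x := by linarith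
  set y := Real.sqrt (1 + x) with hy
  set P : ℝ := 1 + x/2 - x^2/8 + x^3/16 with hPdef
  have hy0 : 0 ≤ y := Real.sqrt_nonneg _
  have hy2 : y^2 = 1 + x := Real.sq_sqrt h0
  have hyge : (7/10 : ℝ) ≤ y := by nlinarith [hy2, hy0]
  have hP : (7/10 : ℝ) ≤ P := by rw [hPdef]; nlinarith [sq_nonneg x]
  have key : (y - P) * (y + P) = x^4 * (-(5/64) + x/64 - x^2/256) := by
    have h' : (y - P) * (y + P) = y^2 - P^2 := by ring
    rw [h', hy2, hPdef]; ring
  have habs : |(-(5/64) + x/64 - x^2/256 : ℝ)| ≤ 1/8 := by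
    rw [abs_le]; constructor <;> nlinarith [sq_nonneg x]
  have hsum : (7/5 : ℝ) ≤ y + P := by linarith
  have hx4 : (0:ℝ) ≤ x^4 := by positivity
  have hmain : |y - P| * (7/5) ≤ x^4 * (1/8) := by
    calc |y - P| * (7/5) ≤ |y - P| * (y + P) :=
          mul_le_mul_of_nonneg_left hsum (abs_nonneg _)
      _ = |(y - P) * (y + P)| := by
          rw [abs_mul, abs_of_pos (lt_of_lt_of_le (by norm_num) hsum)]
      _ = x^4 * |(-(5/64) + x/64 - x^2/256 : ℝ)| := by
          rw [key, abs_mul, abs_of_nonneg hx4]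
      _ ≤ x^4 * (1/8) := by gcongr
  have := abs_nonneg (y - P)
  linarith

lemma arccos_taylor {u : ℝ} (h0 : 0 ≤ u) (h1 : u ≤ 1/4) :
    |(Real.arccos (1 - u))^2 - 2*u| ≤ u^2 := by
  set θ := Real.arccos (1 - u) with hθ
  have hθ0 : 0 ≤ θ := Real.arccos_nonneg _
  have hcos : Real.cos θ = 1 - u := Real.cos_arccos (by linarith) (by linarith)
  have hθ1 : θ ≤ 1 := by
    have hc1 : Real.cos 1 ≤ 1 - u := by
      have := Real.cos_one_le
      linarith
    have h2 : θ ≤ Real.arccos (Real.cos 1) := by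
      rw [hθ, Real.arccos_eq_pi_div_two_sub_arcsin, Real.arccos_eq_pi_div_two_sub_arcsin]
      have := Real.monotone_arcsin hc1
      linarith
    rwa [Real.arccos_cos (by norm_num) (by linarith [Real.pi_gt_three])] at h2
  have hb := Real.cos_bound (by rwa [abs_of_nonneg hθ0] : |θ| ≤ 1)
  rw [hcos, abs_of_nonneg hθ0] at hb
  have hb' : -(θ^4 * (5/96)) ≤ θ^2/2 - u ∧ θ^2/2 - u ≤ θ^4 * (5/96) := by
    have h' : (1 - u - (1 - θ^2/2)) = θ^2/2 - u := by ring
    rw [h'] at hb; exact abs_le.1 hb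
  have hθsq : θ^2 ≤ 1 := by nlinarith
  have hθ42 : θ^4 ≤ θ^2 := by nlinarith [sq_nonneg θ]
  have hu_ge : θ^2 * (43/96) ≤ u := by linarith [hb'.2]
  have hθ4 : θ^4 ≤ 6 * u^2 := by
    have h2 := mul_self_le_mul_self (by positivity : (0:ℝ) ≤ θ^2 * (43/96)) hu_ge
    nlinarith [sq_nonneg θ]
  rw [abs_le]
  constructor
  · nlinarith [hb'.1, hθ4]
  · nlinarith [hb'.2, hθ4]

lemma pow_facts {a : ℝ} (h0 : 0 ≤ a) (h1 : a ≤ 1) :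
    a^3 ≤ a ∧ a^4 ≤ a^2 ∧ a^3 ≤ a^2 ∧ a^2 ≤ 1 := by
  refine ⟨?_, ?_, ?_, ?_⟩ <;> nlinarith [sq_nonneg a, sq_nonneg (1-a), sq_nonneg (a - a^2)]

set_option maxHeartbeats 2000000 in
/-- Discrete geodesic divergence approximation: the Jeffreys divergence
approximates the squared Fisher–Rao geodesic distance to fourth order,
`D_KL(p ‖ p+δ) + D_KL(p+δ ‖ p) = (2 arccos (∑ √(pᵢ (pᵢ + δᵢ))))² + O(‖δ‖⁴)`
as `δ → 0` within the hyperplane `{δ : ∑ δᵢ = 0}`. -/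
theorem jeffreys_approx_squared_geodesic (C : ℕ) (hC : 0 < C) (p : Fin C → ℝ)
    (hp : ∀ i, 0 < p i) (hpsum : ∑ i, p i = 1) :
    (fun δ : Fin C → ℝ =>
        ((∑ i, p i * Real.log (p i / (p i + δ i))) +
            (∑ i, (p i + δ i) * Real.log ((p i + δ i) / p i))) -
          (2 * Real.arccos (∑ i, Real.sqrt (p i * (p i + δ i)))) ^ 2)
      =O[nhdsWithin 0 {δ : Fin C → ℝ | ∑ i, δ i = 0}]
      (fun δ : Fin C → ℝ => ‖δ‖ ^ 4) := by
  obtain ⟨j, -, hj⟩ := Finset.exists_min_image Finset.univ p ⟨⟨0, hC⟩, Finset.mem_univ _⟩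
  have hm0 : 0 < p j := hp j
  have hpm : ∀ i, p j ≤ p i := fun i => hj i (Finset.mem_univ i)
  have hple1 : ∀ i, p i ≤ 1 := by
    intro i
    have h := Finset.single_le_sum (f := p) (fun k _ => (hp k).le) (Finset.mem_univ i)
    rwa [hpsum] at h
  set K := ∑ i, 1 / p i ^ 3 with hK
  have hK1 : 1 ≤ K := by
    rw [← hpsum, hK]
    apply Finset.sum_le_sum
    intro i _
    rw [le_div_iff₀ (pow_pos (hp i) 3)]
    have h1 : p i * p i ^ 3 = p i ^ 4 := by ring
    rw [h1]
    calc p i ^ 4 ≤ 1 ^ 4 := pow_le_pow_left₀ (hp i).le (hple1 i) 4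
      _ = 1 := one_pow 4
  have hK0 : 0 < K := lt_of_lt_of_le one_pos hK1
  have hKK : K ≤ K^2 := by
    calc K = K * 1 := (mul_one K).symm
      _ ≤ K * K := mul_le_mul_of_nonneg_left hK1 hK0.le
      _ = K^2 := (sq K).symm
  set ε := min 1 (min (p j/2) (1/(3*K))) with hε
  have hε0 : 0 < ε := lt_min one_pos (lt_min (by positivity) (by positivity))
  rw [Asymptotics.isBigO_iff]
  refine ⟨26 * K^2, ?_⟩
  have hball : ∀ᶠ δ : Fin C → ℝ in nhdsWithin 0 {δ | ∑ i, δ i = 0}, ‖δ‖ < ε :=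
    Filter.eventually_iff_exists_mem.2
      ⟨Metric.ball 0 ε, nhdsWithin_le_nhds (Metric.ball_mem_nhds _ hε0),
        fun y hy => by simpa [mem_ball_zero_iff] using hy⟩
  filter_upwards [hball, eventually_mem_nhdsWithin] with δ hδε hδS
  have hδ1 : ‖δ‖ ≤ 1 := hδε.le.trans (min_le_left _ _)
  have hδm : ‖δ‖ ≤ p j / 2 := hδε.le.trans ((min_le_right _ _).trans (min_le_left _ _))
  have hδK : ‖δ‖ ≤ 1/(3*K) := hδε.le.trans ((min_le_right _ _).trans (min_le_right _ _))
  have hdn : ∀ i, |δ i| ≤ ‖δ‖ := fun i => by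
    simpa using norm_le_pi_norm δ i
  have hn0 : (0:ℝ) ≤ ‖δ‖ := norm_nonneg δ
  have hxi : ∀ i, |δ i / p i| ≤ 1/2 := by
    intro i
    rw [abs_div, abs_of_pos (hp i), div_le_iff₀ (hp i)]
    have h1 := hdn i
    have h2 := hpm i
    linarith
  have hq : ∀ i, 0 < p i + δ i := by
    intro i
    have h1 : |δ i| ≤ p i / 2 := (hdn i).trans (hδm.trans (by linarith [hpm i]))
    have h2 := (abs_le.1 h1).1
    have h3 := hp i
    linarith
  -- norm facts
  have hd4 : ∀ i, δ i^4 ≤ ‖δ‖^4 := fun i => by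
    have h1 : δ i^4 = |δ i|^4 := by rw [← abs_pow, abs_of_nonneg (by positivity)]
    rw [h1]; exact pow_le_pow_left₀ (abs_nonneg _) (hdn i) 4
  have hd2 : ∀ i, δ i^2 ≤ ‖δ‖^2 := fun i => by
    have h1 : δ i^2 = |δ i|^2 := by rw [← abs_pow, abs_of_nonneg (by positivity)]
    rw [h1]; exact pow_le_pow_left₀ (abs_nonneg _) (hdn i) 2
  have hnf := pow_facts hn0 hδ1
  have hsq1 : ‖δ‖^2 ≤ 1 := hnf.2.2.2
  have h4le2 : ‖δ‖^4 ≤ ‖δ‖^2 := hnf.2.1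
  have h3le2 : ‖δ‖^3 ≤ ‖δ‖^2 := hnf.2.2.1
  -- Step A : rewrite Jeffreys sum
  have hDJ : (∑ i, p i * Real.log (p i / (p i + δ i))) +
      (∑ i, (p i + δ i) * Real.log ((p i + δ i)/p i))
      = ∑ i, p i * ((δ i / p i) * Real.log (1 + δ i / p i)) := by
    rw [← Finset.sum_add_distrib]
    refine Finset.sum_congr rfl fun i _ => ?_
    have hpne : p i ≠ 0 := (hp i).ne'
    have hqp : (p i + δ i)/p i = 1 + δ i / p i := by field_simp
    have h1 : Real.log (p i / (p i + δ i)) = - Real.log (1 + δ i / p i) := by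
      rw [← hqp, ← Real.log_inv]
      congr 1
      rw [inv_div]
    have h2 : Real.log ((p i + δ i) / p i) = Real.log (1 + δ i / p i) := by rw [hqp]
    rw [h1, h2]
    field_simp
    ring
  -- M identity
  have hM : (∑ i, δ i^2/p i) - (∑ i, δ i^3/p i^2)/2
      = ∑ i, p i * ((δ i/p i)^2 - (δ i/p i)^3/2) := by
    rw [Finset.sum_div, ← Finset.sum_sub_distrib]
    refine Finset.sum_congr rfl fun i _ => ?_
    have hpne : p i ≠ 0 := (hp i).ne'
    field_simp
  -- Step B : log bound
  have hb1 : |((∑ i, p i * Real.log (p i / (p i + δ i))) +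
      (∑ i, (p i + δ i) * Real.log ((p i + δ i)/p i))) -
      ((∑ i, δ i^2/p i) - (∑ i, δ i^3/p i^2)/2)| ≤ 2*K*‖δ‖^4 := by
    rw [hDJ, hM, ← Finset.sum_sub_distrib]
    calc |∑ i, (p i * ((δ i/p i) * Real.log (1 + δ i/p i)) -
            p i * ((δ i/p i)^2 - (δ i/p i)^3/2))|
        ≤ ∑ i, |p i * ((δ i/p i) * Real.log (1 + δ i/p i)) -
            p i * ((δ i/p i)^2 - (δ i/p i)^3/2)| := Finset.abs_sum_le_sum_abs _ _
      _ ≤ ∑ i, 2*‖δ‖^4 * (1/p i^3) := by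
          refine Finset.sum_le_sum fun i _ => ?_
          rw [← mul_sub, abs_mul, abs_of_pos (hp i)]
          have hb := log_taylor3 (hxi i)
          calc p i * |(δ i/p i) * Real.log (1 + δ i/p i) - ((δ i/p i)^2 - (δ i/p i)^3/2)|
              ≤ p i * (2 * |δ i/p i|^4) := mul_le_mul_of_nonneg_left hb (hp i).le
            _ = 2 * δ i^4 / p i^3 := by
                have hpne : p i ≠ 0 := (hp i).ne'
                rw [abs_div, abs_of_pos (hp i), div_pow, ← abs_pow,
                  abs_of_nonneg (by positivity : (0:ℝ) ≤ δ i^4)]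
                field_simp
            _ ≤ 2*‖δ‖^4 * (1/p i^3) := by
                rw [mul_one_div]
                exact (div_le_div_iff_of_pos_right (pow_pos (hp i) 3)).mpr
                  (by linarith [hd4 i])
      _ = 2*K*‖δ‖^4 := by
          rw [← Finset.mul_sum, ← hK]; ring
  -- Step C : sqrt expansion
  have hs_eq : (∑ i, Real.sqrt (p i * (p i + δ i)))
      = ∑ i, p i * Real.sqrt (1 + δ i / p i) := by
    refine Finset.sum_congr rfl fun i _ => ?_
    have hpne : p i ≠ 0 := (hp i).ne'
    have h1 : p i * (p i + δ i) = (p i)^2 * (1 + δ i / p i) := by field_simp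
    rw [h1, Real.sqrt_mul (sq_nonneg _), Real.sqrt_sq (hp i).le]
  have hPsum : (∑ i, p i * (1 + (δ i/p i)/2 - (δ i/p i)^2/8 + (δ i/p i)^3/16))
      = 1 - (∑ i, δ i^2/p i)/8 + (∑ i, δ i^3/p i^2)/16 := by
    have hterm : ∀ i, p i * (1 + (δ i/p i)/2 - (δ i/p i)^2/8 + (δ i/p i)^3/16)
        = p i + δ i/2 - (δ i^2/p i)/8 + (δ i^3/p i^2)/16 := fun i => by
      have hpne : p i ≠ 0 := (hp i).ne'
      field_simp
    rw [Finset.sum_congr rfl fun i _ => hterm i]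
    rw [Finset.sum_add_distrib, Finset.sum_sub_distrib, Finset.sum_add_distrib,
      ← Finset.sum_div, ← Finset.sum_div, ← Finset.sum_div, hpsum, hδS]
    ring
  set s := ∑ i, Real.sqrt (p i * (p i + δ i)) with hs
  have hb2 : |s - (1 - (∑ i, δ i^2/p i)/8 + (∑ i, δ i^3/p i^2)/16)| ≤ K*‖δ‖^4 := by
    have h1 : s - (1 - (∑ i, δ i^2/p i)/8 + (∑ i, δ i^3/p i^2)/16)
        = ∑ i, p i * (Real.sqrt (1 + δ i/p i) -
            (1 + (δ i/p i)/2 - (δ i/p i)^2/8 + (δ i/p i)^3/16)) := by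
      rw [hs_eq, ← hPsum, ← Finset.sum_sub_distrib]
      exact Finset.sum_congr rfl fun i _ => (mul_sub _ _ _).symm
    rw [h1]
    calc |∑ i, p i * (Real.sqrt (1 + δ i/p i) -
            (1 + (δ i/p i)/2 - (δ i/p i)^2/8 + (δ i/p i)^3/16))|
        ≤ ∑ i, |p i * (Real.sqrt (1 + δ i/p i) -
            (1 + (δ i/p i)/2 - (δ i/p i)^2/8 + (δ i/p i)^3/16))| :=
          Finset.abs_sum_le_sum_abs _ _
      _ ≤ ∑ i, ‖δ‖^4 * (1/p i^3) := by
          refine Finset.sum_le_sum fun i _ => ?_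
          rw [abs_mul, abs_of_pos (hp i)]
          have hb := sqrt_taylor3 (hxi i)
          calc p i * |Real.sqrt (1 + δ i/p i) -
                (1 + (δ i/p i)/2 - (δ i/p i)^2/8 + (δ i/p i)^3/16)|
              ≤ p i * (δ i/p i)^4 := mul_le_mul_of_nonneg_left hb (hp i).le
            _ = δ i^4 / p i^3 := by
                have hpne : p i ≠ 0 := (hp i).ne'
                rw [div_pow]; field_simp
            _ ≤ ‖δ‖^4 * (1/p i^3) := by
                rw [mul_one_div]
                exact (div_le_div_iff_of_pos_right (pow_pos (hp i) 3)).mpr (hd4 i)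
      _ = K*‖δ‖^4 := by rw [← Finset.mul_sum, ← hK]; ring
  -- s ≤ 1
  have hqsum : ∑ i, (p i + δ i) = 1 := by
    rw [Finset.sum_add_distrib, hpsum, hδS, add_zero]
  have hsle : s ≤ 1 := by
    have hterm : ∀ i, Real.sqrt (p i * (p i + δ i)) ≤ (p i + (p i + δ i))/2 := by
      intro i
      calc Real.sqrt (p i * (p i + δ i))
          ≤ Real.sqrt (((p i + (p i + δ i))/2)^2) :=
            Real.sqrt_le_sqrt (by linarith [sq_nonneg (p i - (p i + δ i))])
        _ = (p i + (p i + δ i))/2 :=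
            Real.sqrt_sq (by linarith [(hp i).le, (hq i).le])
    calc s ≤ ∑ i, (p i + (p i + δ i))/2 := Finset.sum_le_sum fun i _ => hterm i
      _ = 1 := by
        rw [← Finset.sum_div, Finset.sum_add_distrib, hpsum, hqsum]; norm_num
  have hu0 : 0 ≤ 1 - s := by linarith
  -- A and B bounds
  have hAle : (∑ i, δ i^2/p i) ≤ K * ‖δ‖^2 := by
    calc (∑ i, δ i^2/p i) ≤ ∑ i, ‖δ‖^2 * (1/p i^3) := by
          refine Finset.sum_le_sum fun i _ => ?_
          rw [mul_one_div, div_le_div_iff₀ (hp i) (pow_pos (hp i) 3)]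
          have hpf := pow_facts (hp i).le (hple1 i)
          calc δ i^2 * p i^3 ≤ ‖δ‖^2 * p i^3 :=
                mul_le_mul_of_nonneg_right (hd2 i) (pow_pos (hp i) 3).le
            _ ≤ ‖δ‖^2 * p i := mul_le_mul_of_nonneg_left hpf.1 (by positivity)
      _ = K * ‖δ‖^2 := by rw [← Finset.mul_sum, ← hK]; ring
  have hA0 : 0 ≤ (∑ i, δ i^2/p i) :=
    Finset.sum_nonneg fun i _ => div_nonneg (by positivity) (hp i).le
  have hBle : |∑ i, δ i^3/p i^2| ≤ K * ‖δ‖^2 := by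
    calc |∑ i, δ i^3/p i^2| ≤ ∑ i, |δ i^3/p i^2| := Finset.abs_sum_le_sum_abs _ _
      _ ≤ ∑ i, ‖δ‖^2 * (1/p i^3) := by
          refine Finset.sum_le_sum fun i _ => ?_
          rw [abs_div, abs_of_pos (pow_pos (hp i) 2), mul_one_div,
            div_le_div_iff₀ (pow_pos (hp i) 2) (pow_pos (hp i) 3)]
          have h1 : |δ i^3| = |δ i|^3 := by rw [abs_pow]
          rw [h1]
          have hpf := pow_facts (hp i).le (hple1 i)
          have h6 : |δ i|^3 ≤ ‖δ‖^2 :=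
            le_trans (pow_le_pow_left₀ (abs_nonneg _) (hdn i) 3) h3le2
          calc |δ i|^3 * p i^3 ≤ ‖δ‖^2 * p i^3 :=
                mul_le_mul_of_nonneg_right h6 (pow_pos (hp i) 3).le
            _ ≤ ‖δ‖^2 * p i^2 := mul_le_mul_of_nonneg_left hpf.2.2.1 (by positivity)
      _ = K * ‖δ‖^2 := by rw [← Finset.mul_sum, ← hK]; ring
  have hb2' := abs_le.1 hb2
  have hBle' := abs_le.1 hBle
  have hK4 : K * ‖δ‖^4 ≤ K * ‖δ‖^2 := mul_le_mul_of_nonneg_left h4le2 hK0.le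
  have hu2 : 1 - s ≤ 2 * K * ‖δ‖^2 := by linarith [hb2'.1, hAle, hBle'.1, hK4]
  have hu14 : 1 - s ≤ 1/4 := by
    have h1 := mul_self_le_mul_self hn0 hδK
    have h2 : ‖δ‖^2 ≤ 1/(9*K^2) := by
      calc ‖δ‖^2 = ‖δ‖ * ‖δ‖ := sq ‖δ‖ ▸ by ring
        _ ≤ (1/(3*K)) * (1/(3*K)) := h1
        _ = 1/(9*K^2) := by field_simp; ring
    have hKd : K * ‖δ‖^2 ≤ K * (1/(9*K^2)) := mul_le_mul_of_nonneg_left h2 hK0.le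
    have hKd2 : K * (1/(9*K^2)) = 1/(9*K) := by field_simp
    have hKd3 : 1/(9*K) ≤ 1/9 := by
      rw [div_le_div_iff₀ (by positivity) (by norm_num)]
      linarith
    linarith [hu2]
  -- arccos bound
  have harc := arccos_taylor hu0 hu14
  have hss : (1 : ℝ) - (1 - s) = s := by ring
  rw [hss] at harc
  have hb3 : |(2*Real.arccos s)^2 - 8*(1-s)| ≤ 16*K^2*‖δ‖^4 := by
    have h4 : |(2*Real.arccos s)^2 - 8*(1-s)| = 4 * |(Real.arccos s)^2 - 2*(1-s)| := by
      rw [show (2*Real.arccos s)^2 - 8*(1-s) = 4 * ((Real.arccos s)^2 - 2*(1-s)) by ring,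
        abs_mul, abs_of_nonneg (by norm_num : (0:ℝ) ≤ 4)]
    rw [h4]
    have h5 : (1-s)^2 ≤ 4*K^2*‖δ‖^4 := by
      have h6 := mul_self_le_mul_self hu0 hu2
      calc (1-s)^2 = (1-s)*(1-s) := sq (1-s)
        _ ≤ (2*K*‖δ‖^2) * (2*K*‖δ‖^2) := h6
        _ = 4*K^2*‖δ‖^4 := by ring
    linarith [harc]
  -- assembly
  have hb1' := abs_le.1 hb1
  have hb3' := abs_le.1 hb3
  have hKn : K * ‖δ‖^4 ≤ K^2 * ‖δ‖^4 :=
    mul_le_mul_of_nonneg_right hKK (by positivity)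
  rw [Real.norm_eq_abs, Real.norm_eq_abs,
    abs_of_nonneg (by positivity : (0:ℝ) ≤ ‖δ‖^4), abs_le]
  constructor
  · linarith [hb1'.1, hb2'.2, hb3'.2, hKn]
  · linarith [hb1'.2, hb2'.1, hb3'.1, hKn]
end
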